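/- For the optimal GMM weight, the matrix Σ − Σ_w is positive semidefinite for any weight choice: given a full-column-rank r × d matrix Γ and positive definite V, (ΓᵀWΓ)⁻¹ΓᵀW V WᵀΓ(ΓᵀWᵀΓ)⁻¹ − (ΓᵀV⁻¹Γ)⁻¹ is positive semidefinite for any symmetric positive definite W. -/

import Mathlib

open Matrix

private lemma mulVec_inj_of_rank {r d : ℕ} (Γ : Matrix (Fin r) (Fin d) ℝ)
    (hrank : Γ.rank = d) : Function.Injective Γ.mulVec := by
  have h := Γ.mulVecLin.finrank_range_add_finrank_ker
  rw [Matrix.rank] at hrank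
  have hdom : Module.finrank ℝ (Fin d → ℝ) = d := by simp
  rw [hrank, hdom] at h
  have hker : Module.finrank ℝ (LinearMap.ker Γ.mulVecLin) = 0 := by omega
  have : LinearMap.ker Γ.mulVecLin = ⊥ := Submodule.finrank_eq_zero.mp hker
  have hinj : Function.Injective Γ.mulVecLin := LinearMap.ker_eq_bot.mp this
  exact hinj

private lemma posDef_conj {r d : ℕ} (Γ : Matrix (Fin r) (Fin d) ℝ)
    (hrank : Γ.rank = d) {M : Matrix (Fin r) (Fin r) ℝ} (hM : M.PosDef) :
    (Γᵀ * M * Γ).PosDef := by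
  have hinj := mulVec_inj_of_rank Γ hrank
  refine PosDef.of_dotProduct_mulVec_pos ?_ ?_
  · have h1 : (Γᴴ * M * Γ).IsHermitian := isHermitian_conjTranspose_mul_mul Γ hM.1
    rwa [conjTranspose_eq_transpose_of_trivial] at h1
  · intro x hx
    have hΓx : Γ *ᵥ x ≠ 0 := by
      intro h
      exact hx (hinj (h.trans (Γ.mulVec_zero).symm))
    have := hM.dotProduct_mulVec_pos hΓx
    simpa only [star_mulVec, dotProduct_mulVec, vecMul_vecMul,
      conjTranspose_eq_transpose_of_trivial] using this

/-- Optimality of the GMM weight W = V⁻¹: for Γ of full column rank and V, W symmetric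
positive definite, Σ_W − Σ_* is positive semidefinite, where
Σ_W = (ΓᵀWΓ)⁻¹ΓᵀWVWΓ(ΓᵀWΓ)⁻¹ and Σ_* = (ΓᵀV⁻¹Γ)⁻¹. -/
theorem stmt_16 {r d : ℕ} (Γ : Matrix (Fin r) (Fin d) ℝ) (hrank : Γ.rank = d)
    (V W : Matrix (Fin r) (Fin r) ℝ) (hV : V.PosDef) (hW : W.PosDef) :
    ((Γᵀ * W * Γ)⁻¹ * Γᵀ * W * V * W * Γ * (Γᵀ * W * Γ)⁻¹
      - (Γᵀ * V⁻¹ * Γ)⁻¹).PosSemidef := by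
  have hVinv : (V⁻¹).PosDef := hV.inv
  have hD : (Γᵀ * W * Γ).PosDef := posDef_conj Γ hrank hW
  have hC : (Γᵀ * V⁻¹ * Γ).PosDef := posDef_conj Γ hrank hVinv
  have hVdet : IsUnit V.det := hV.det_pos.ne'.isUnit
  have hDdet : IsUnit (Γᵀ * W * Γ).det := hD.det_pos.ne'.isUnit
  have hCdet : IsUnit (Γᵀ * V⁻¹ * Γ).det := hC.det_pos.ne'.isUnit
  set E := (Γᵀ * W * Γ)⁻¹ with hEdef
  set F := (Γᵀ * V⁻¹ * Γ)⁻¹ with hFdef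
  -- symmetry facts
  have hWt : Wᵀ = W := by
    rw [← conjTranspose_eq_transpose_of_trivial]; exact hW.1
  have hVt : Vᵀ = V := by
    rw [← conjTranspose_eq_transpose_of_trivial]; exact hV.1
  have hVit : (V⁻¹)ᵀ = V⁻¹ := by rw [transpose_nonsing_inv, hVt]
  have hEt : Eᵀ = E := by
    rw [hEdef, transpose_nonsing_inv, transpose_mul, transpose_mul,
      transpose_transpose, hWt, Matrix.mul_assoc]
  have hFt : Fᵀ = F := by
    rw [hFdef, transpose_nonsing_inv, transpose_mul, transpose_mul,
      transpose_transpose, hVit, Matrix.mul_assoc]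
  -- cancellation facts
  have hv1 : ∀ X : Matrix (Fin r) (Fin d) ℝ, V * (V⁻¹ * X) = X := fun X => by
    rw [← Matrix.mul_assoc, Matrix.mul_nonsing_inv _ hVdet, Matrix.one_mul]
  have hv2 : ∀ X : Matrix (Fin r) (Fin d) ℝ, V⁻¹ * (V * X) = X := fun X => by
    rw [← Matrix.mul_assoc, Matrix.nonsing_inv_mul _ hVdet, Matrix.one_mul]
  have hE1 : ∀ X : Matrix (Fin d) (Fin d) ℝ, E * (Γᵀ * (W * (Γ * X))) = X := fun X => by
    rw [show Γᵀ * (W * (Γ * X)) = (Γᵀ * W * Γ) * X by simp [Matrix.mul_assoc],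
      hEdef, ← Matrix.mul_assoc, Matrix.nonsing_inv_mul _ hDdet, Matrix.one_mul]
  have hF1 : ∀ X : Matrix (Fin d) (Fin d) ℝ, F * (Γᵀ * (V⁻¹ * (Γ * X))) = X := fun X => by
    rw [show Γᵀ * (V⁻¹ * (Γ * X)) = (Γᵀ * V⁻¹ * Γ) * X by simp [Matrix.mul_assoc],
      hFdef, ← Matrix.mul_assoc, Matrix.nonsing_inv_mul _ hCdet, Matrix.one_mul]
  have hDE : Γᵀ * (W * (Γ * E)) = 1 := by
    rw [show Γᵀ * (W * (Γ * E)) = (Γᵀ * W * Γ) * E by simp [Matrix.mul_assoc],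
      hEdef, Matrix.mul_nonsing_inv _ hDdet]
  set N : Matrix (Fin r) (Fin d) ℝ := W * Γ * E - V⁻¹ * Γ * F with hNdef
  have hNH : Nᴴ = E * (Γᵀ * W) - F * (Γᵀ * V⁻¹) := by
    rw [conjTranspose_eq_transpose_of_trivial, hNdef, transpose_sub,
      transpose_mul, transpose_mul, transpose_mul, transpose_mul,
      hWt, hVit, hEt, hFt]
  have key : E * Γᵀ * W * V * W * Γ * E - F = Nᴴ * V * N := by
    rw [hNH, hNdef]
    simp only [Matrix.sub_mul, Matrix.mul_sub, Matrix.mul_assoc, hv1, hv2, hE1, hF1,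
      hDE, Matrix.mul_one]
    abel
  rw [key]
  exact hV.posSemidef.conjTranspose_mul_mul_same N
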